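/- Let M and M̃ be complex-valued continuous kernels on the triangle {(x,t) : 0 ≤ t ≤ x ≤ π} and λ ∈ ℂ. Let ψ : [0,π] → ℂ be differentiable and satisfy the adjoint equation (13): −i·ψ'(x) + ∫ₓ^π M(t,x)·ψ(t) dt = λ·ψ(x) for x ∈ [0,π], with ψ(π) = 1; let ẽ : [0,π] → ℂ be differentiable and satisfy i·ẽ'(x) + ∫₀ˣ M̃(x,t)·ẽ(t) dt = λ·ẽ(x) for x ∈ [0,π], with ẽ(0) = 1. Then ∫₀^π ψ(x) · (∫₀ˣ (M(x,t) − M̃(x,t))·ẽ(t) dt) dx = i·(ẽ(π) − ψ(0)). -/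

import Mathlib

open Complex MeasureTheory Set Real

/-- The triangle `{(x,t) : 0 ≤ t ≤ x ≤ π}`. -/
def Triangle : Set (ℝ × ℝ) := {p | 0 ≤ p.2 ∧ p.2 ≤ p.1 ∧ p.1 ≤ Real.pi}


lemma exists_ext {X : Type*} [TopologicalSpace X] [NormalSpace X] {s : Set X}
    (hs : IsClosed s) (f : X → ℂ) (hf : ContinuousOn f s) :
    ∃ g : X → ℂ, Continuous g ∧ ∀ x ∈ s, g x = f x := by
  obtain ⟨g, hg⟩ := ContinuousMap.exists_restrict_eq (Y := ℂ) hs ⟨s.restrict f, hf.restrict⟩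
  refine ⟨g, g.continuous, fun x hx => ?_⟩
  have := ContinuousMap.congr_fun hg ⟨x, hx⟩
  exact this

lemma isClosed_Triangle : IsClosed Triangle := by
  have : Triangle = {p : ℝ × ℝ | 0 ≤ p.2} ∩ ({p : ℝ × ℝ | p.2 ≤ p.1} ∩ {p : ℝ × ℝ | p.1 ≤ Real.pi}) := by
    ext p; simp [Triangle, and_assoc]
  rw [this]
  exact (isClosed_le continuous_const continuous_snd).inter
    ((isClosed_le continuous_snd continuous_fst).inter
      (isClosed_le continuous_fst continuous_const))

lemma tri_swap (G : ℝ × ℝ → ℂ) (hG : Continuous G) :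
    (∫ x in (0:ℝ)..Real.pi, ∫ t in (0:ℝ)..x, G (x, t))
      = ∫ t in (0:ℝ)..Real.pi, ∫ x in t..Real.pi, G (x, t) := by
  have hπ : (0:ℝ) ≤ Real.pi := Real.pi_nonneg
  have hs : MeasurableSet (Ioc (0:ℝ) Real.pi) := measurableSet_Ioc
  obtain ⟨C, hC⟩ := (isCompact_Icc.prod isCompact_Icc :
      IsCompact (Icc (0:ℝ) Real.pi ×ˢ Icc (0:ℝ) Real.pi)).exists_bound_of_continuousOn
      hG.continuousOn
  have hC0 : 0 ≤ C := le_trans (norm_nonneg (G (0, 0)))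
    (hC (0, 0) ⟨⟨le_refl _, hπ⟩, ⟨le_refl _, hπ⟩⟩)
  set T : Set (ℝ × ℝ) := {p | p.2 ≤ p.1} with hTdef
  have hT : MeasurableSet T := (isClosed_le continuous_snd continuous_fst).measurableSet
  set μ := volume.restrict (Ioc (0:ℝ) Real.pi) with hμ
  have hfin : IsFiniteMeasure μ := by
    constructor
    rw [hμ, Measure.restrict_apply MeasurableSet.univ, Set.univ_inter, Real.volume_Ioc]
    exact ENNReal.ofReal_lt_top
  have hInt : Integrable (T.indicator G) (μ.prod μ) := by
    have hmeas : AEStronglyMeasurable (T.indicator G) (μ.prod μ) :=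
      (hG.aestronglyMeasurable.indicator hT)
    refine Integrable.mono' (integrable_const C) hmeas ?_
    have hae : ∀ᵐ p ∂(μ.prod μ), p ∈ (Ioc (0:ℝ) Real.pi) ×ˢ (Ioc (0:ℝ) Real.pi) := by
      rw [hμ, Measure.prod_restrict]
      exact ae_restrict_mem (hs.prod hs)
    filter_upwards [hae] with p hp
    by_cases hpT : p ∈ T
    · rw [Set.indicator_of_mem hpT]
      exact hC p ⟨Ioc_subset_Icc_self hp.1, Ioc_subset_Icc_self hp.2⟩
    · rw [Set.indicator_of_notMem hpT]; simpa using hC0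
  have swap : (∫ x, ∫ t, T.indicator G (x, t) ∂μ ∂μ) = ∫ t, ∫ x, T.indicator G (x, t) ∂μ ∂μ := by
    apply integral_integral_swap (f := fun x t => T.indicator G (x, t))
    exact hInt
  calc (∫ x in (0:ℝ)..Real.pi, ∫ t in (0:ℝ)..x, G (x, t))
      = ∫ x in Ioc (0:ℝ) Real.pi, (∫ t in (0:ℝ)..x, G (x, t)) :=
        intervalIntegral.integral_of_le hπ
    _ = ∫ x in Ioc (0:ℝ) Real.pi, (∫ t in Ioc (0:ℝ) Real.pi, T.indicator G (x, t)) := by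
        apply setIntegral_congr_fun hs
        intro x hx
        have hx0 : (0:ℝ) ≤ x := le_of_lt hx.1
        show (∫ t in (0:ℝ)..x, G (x, t)) = ∫ t in Ioc (0:ℝ) Real.pi, T.indicator G (x, t)
        rw [intervalIntegral.integral_of_le hx0]
        have h1 : ∀ t, T.indicator G (x, t) = (Iic x).indicator (fun t => G (x, t)) t := by
          intro t
          simp only [Set.indicator_apply, hTdef, mem_setOf_eq, mem_Iic]
        simp only [h1]
        rw [setIntegral_indicator measurableSet_Iic, Set.Ioc_inter_Iic, min_eq_right hx.2]
    _ = ∫ t in Ioc (0:ℝ) Real.pi, (∫ x in Ioc (0:ℝ) Real.pi, T.indicator G (x, t)) := swap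
    _ = ∫ t in Ioc (0:ℝ) Real.pi, (∫ x in t..Real.pi, G (x, t)) := by
        apply setIntegral_congr_fun hs
        intro t ht
        show (∫ x in Ioc (0:ℝ) Real.pi, T.indicator G (x, t)) = ∫ x in t..Real.pi, G (x, t)
        have h1 : ∀ x, T.indicator G (x, t) = (Ici t).indicator (fun x => G (x, t)) x := by
          intro x
          simp only [Set.indicator_apply, hTdef, mem_setOf_eq, mem_Ici]
        simp only [h1]
        rw [setIntegral_indicator measurableSet_Ici]
        have h2 : Ioc (0:ℝ) Real.pi ∩ Ici t = Icc t Real.pi := by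
          ext y
          simp only [mem_inter_iff, mem_Ioc, mem_Ici, mem_Icc]
          constructor
          · rintro ⟨⟨_, h⟩, h'⟩; exact ⟨h', h⟩
          · rintro ⟨h', h⟩; exact ⟨⟨lt_of_lt_of_le ht.1 h', h⟩, h'⟩
        rw [h2, integral_Icc_eq_integral_Ioc, ← intervalIntegral.integral_of_le ht.2]
    _ = ∫ t in (0:ℝ)..Real.pi, (∫ x in t..Real.pi, G (x, t)) :=
        (intervalIntegral.integral_of_le hπ).symm

/-- If `ψ` solves the adjoint equation (13) with kernel `M` and `ψ(π) = 1`, and `ẽ`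
solves equation (1) with kernel `M̃` and `ẽ(0) = 1`, then
`∫₀^π ψ(x) ∫₀ˣ (M(x,t) − M̃(x,t)) ẽ(t) dt dx = i (ẽ(π) − ψ(0))`. -/
theorem stmt_7 (M Mt : ℝ → ℝ → ℂ)
    (hM : ContinuousOn (fun p : ℝ × ℝ => M p.1 p.2) Triangle)
    (hMt : ContinuousOn (fun p : ℝ × ℝ => Mt p.1 p.2) Triangle)
    (lam : ℂ) (ψ ψ' et et' : ℝ → ℂ)
    (hψ : ∀ x ∈ Icc (0:ℝ) Real.pi,
      HasDerivWithinAt ψ (ψ' x) (Icc 0 Real.pi) x ∧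
      -(Complex.I * ψ' x) + (∫ t in x..Real.pi, M t x * ψ t) = lam * ψ x)
    (hψπ : ψ Real.pi = 1)
    (het : ∀ x ∈ Icc (0:ℝ) Real.pi,
      HasDerivWithinAt et (et' x) (Icc 0 Real.pi) x ∧
      Complex.I * et' x + (∫ t in (0:ℝ)..x, Mt x t * et t) = lam * et x)
    (het0 : et 0 = 1) :
    (∫ x in (0:ℝ)..Real.pi,
        ψ x * ∫ t in (0:ℝ)..x, (M x t - Mt x t) * et t)
      = Complex.I * (et Real.pi - ψ 0) := by
  have hπ : (0:ℝ) ≤ Real.pi := Real.pi_nonneg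
  have huIcc : uIcc (0:ℝ) Real.pi = Icc 0 Real.pi := uIcc_of_le hπ
  have hψc : ContinuousOn ψ (Icc 0 Real.pi) := fun x hx => ((hψ x hx).1).continuousWithinAt
  have hetc : ContinuousOn et (Icc 0 Real.pi) := fun x hx => ((het x hx).1).continuousWithinAt
  obtain ⟨GM, hGMc, hGM⟩ := exists_ext isClosed_Triangle _ hM
  obtain ⟨GMt, hGMtc, hGMt⟩ := exists_ext isClosed_Triangle _ hMt
  obtain ⟨Ψ, hΨc, hΨ⟩ := exists_ext isClosed_Icc ψ hψc
  obtain ⟨E, hEc, hE⟩ := exists_ext isClosed_Icc et hetc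
  have hmemT : ∀ {x t : ℝ}, x ∈ Icc (0:ℝ) Real.pi → t ∈ Icc (0:ℝ) x → (x, t) ∈ Triangle :=
    fun hx ht => ⟨ht.1, ht.2, hx.2⟩
  have hmemI : ∀ {x t : ℝ}, x ∈ Icc (0:ℝ) Real.pi → t ∈ Icc (0:ℝ) x → t ∈ Icc (0:ℝ) Real.pi :=
    fun hx ht => ⟨ht.1, le_trans ht.2 hx.2⟩
  -- continuity of parametric integrals
  have hF1c : Continuous (fun x => ∫ t in (0:ℝ)..x, GM (x, t) * E t) :=
    intervalIntegral.continuous_parametric_intervalIntegral_of_continuous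
      (f := fun x t => GM (x, t) * E t) (by fun_prop) continuous_id
  have hF2c : Continuous (fun x => ∫ t in (0:ℝ)..x, GMt (x, t) * E t) :=
    intervalIntegral.continuous_parametric_intervalIntegral_of_continuous
      (f := fun x t => GMt (x, t) * E t) (by fun_prop) continuous_id
  have hJc : Continuous (fun x => ∫ t in x..Real.pi, GM (t, x) * Ψ t) := by
    have h1 : Continuous (fun x => ∫ t in (0:ℝ)..Real.pi, GM (t, x) * Ψ t) :=
      intervalIntegral.continuous_parametric_intervalIntegral_of_continuous'
        (f := fun x t => GM (t, x) * Ψ t) (by fun_prop) 0 Real.pi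
    have h2 : Continuous (fun x => ∫ t in (0:ℝ)..x, GM (t, x) * Ψ t) :=
      intervalIntegral.continuous_parametric_intervalIntegral_of_continuous
        (f := fun x t => GM (t, x) * Ψ t) (by fun_prop) continuous_id
    have heq : (fun x => ∫ t in x..Real.pi, GM (t, x) * Ψ t)
        = fun x => (∫ t in (0:ℝ)..Real.pi, GM (t, x) * Ψ t)
            - ∫ t in (0:ℝ)..x, GM (t, x) * Ψ t := by
      funext x
      rw [eq_sub_iff_add_eq, add_comm]
      exact intervalIntegral.integral_add_adjacent_intervals
        (Continuous.intervalIntegrable (by fun_prop) _ _)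
        (Continuous.intervalIntegrable (by fun_prop) _ _)
    rw [heq]; exact h1.sub h2
  -- continuity of the derivatives via the equations
  have hψ'c : ContinuousOn ψ' (Icc 0 Real.pi) := by
    apply ContinuousOn.congr
      (f := fun x => Complex.I * (lam * ψ x - ∫ t in x..Real.pi, GM (t, x) * Ψ t))
      (continuousOn_const.mul ((continuousOn_const.mul hψc).sub hJc.continuousOn))
    intro x hx
    have heq := (hψ x hx).2
    have hJeq : (∫ t in x..Real.pi, M t x * ψ t) = ∫ t in x..Real.pi, GM (t, x) * Ψ t := by
      apply intervalIntegral.integral_congr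
      intro t ht
      dsimp only
      rw [uIcc_of_le hx.2] at ht
      rw [hGM _ ⟨hx.1, ht.1, ht.2⟩, hΨ _ ⟨le_trans hx.1 ht.1, ht.2⟩]
    rw [hJeq] at heq
    linear_combination Complex.I * heq + ψ' x * Complex.I_sq
  have het'c : ContinuousOn et' (Icc 0 Real.pi) := by
    apply ContinuousOn.congr
      (f := fun x => -Complex.I * (lam * et x - ∫ t in (0:ℝ)..x, GMt (x, t) * E t))
      (continuousOn_const.mul ((continuousOn_const.mul hetc).sub hF2c.continuousOn))
    intro x hx
    have heq := (het x hx).2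
    have hFeq : (∫ t in (0:ℝ)..x, Mt x t * et t) = ∫ t in (0:ℝ)..x, GMt (x, t) * E t := by
      apply intervalIntegral.integral_congr
      intro t ht
      dsimp only
      rw [uIcc_of_le hx.1] at ht
      rw [hGMt _ (hmemT hx ht), hE _ (hmemI hx ht)]
    rw [hFeq] at heq
    linear_combination (-Complex.I) * heq + et' x * Complex.I_sq
  -- Step 1 : rewrite with the extensions
  have key1 : (∫ x in (0:ℝ)..Real.pi, ψ x * ∫ t in (0:ℝ)..x, (M x t - Mt x t) * et t)
      = ∫ x in (0:ℝ)..Real.pi, Ψ x * ∫ t in (0:ℝ)..x, (GM (x, t) - GMt (x, t)) * E t := by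
    apply intervalIntegral.integral_congr
    intro x hx
    dsimp only
    rw [huIcc] at hx
    rw [hΨ x hx]
    congr 1
    apply intervalIntegral.integral_congr
    intro t ht
    dsimp only
    rw [uIcc_of_le hx.1] at ht
    rw [hGM _ (hmemT hx ht), hGMt _ (hmemT hx ht), hE _ (hmemI hx ht)]
  -- Step 2 : splitting
  have hsplit : (∫ x in (0:ℝ)..Real.pi, Ψ x * ∫ t in (0:ℝ)..x, (GM (x, t) - GMt (x, t)) * E t)
      = (∫ x in (0:ℝ)..Real.pi, Ψ x * ∫ t in (0:ℝ)..x, GM (x, t) * E t)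
        - ∫ x in (0:ℝ)..Real.pi, Ψ x * ∫ t in (0:ℝ)..x, GMt (x, t) * E t := by
    rw [← intervalIntegral.integral_sub (f := fun x => Ψ x * ∫ t in (0:ℝ)..x, GM (x, t) * E t)
      (g := fun x => Ψ x * ∫ t in (0:ℝ)..x, GMt (x, t) * E t) ((hΨc.mul hF1c).intervalIntegrable _ _)
      ((hΨc.mul hF2c).intervalIntegrable _ _)]
    apply intervalIntegral.integral_congr
    intro x _
    dsimp only
    rw [← mul_sub]
    congr 1
    rw [← intervalIntegral.integral_sub (Continuous.intervalIntegrable (by fun_prop) _ _)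
      (Continuous.intervalIntegrable (by fun_prop) _ _)]
    apply intervalIntegral.integral_congr
    intro t _
    dsimp only
    ring
  -- Step 3 : Fubini on the first piece
  have hp1 : (∫ x in (0:ℝ)..Real.pi, Ψ x * ∫ t in (0:ℝ)..x, GM (x, t) * E t)
      = ∫ x in (0:ℝ)..Real.pi, ∫ t in (0:ℝ)..x, (fun p : ℝ × ℝ => GM p * Ψ p.1 * E p.2) (x, t) := by
    apply intervalIntegral.integral_congr
    intro x _
    dsimp only
    rw [← intervalIntegral.integral_const_mul]
    apply intervalIntegral.integral_congr
    intro t _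
    ring
  have hp2 := tri_swap (fun p : ℝ × ℝ => GM p * Ψ p.1 * E p.2) (by fun_prop)
  have hp3 : (∫ t in (0:ℝ)..Real.pi, ∫ x in t..Real.pi, (fun p : ℝ × ℝ => GM p * Ψ p.1 * E p.2) (x, t))
      = ∫ t in (0:ℝ)..Real.pi, (lam * ψ t + Complex.I * ψ' t) * et t := by
    apply intervalIntegral.integral_congr
    intro t ht
    dsimp only
    rw [huIcc] at ht
    have h1 : (∫ x in t..Real.pi, (fun p : ℝ × ℝ => GM p * Ψ p.1 * E p.2) (x, t))
        = (∫ x in t..Real.pi, M x t * ψ x) * et t := by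
      rw [← intervalIntegral.integral_mul_const]
      apply intervalIntegral.integral_congr
      intro x hx
      dsimp only
      rw [uIcc_of_le ht.2] at hx
      rw [hGM _ ⟨ht.1, hx.1, hx.2⟩, hΨ _ ⟨le_trans ht.1 hx.1, hx.2⟩, hE _ ht]
    simp only at h1 ⊢
    rw [h1]
    have heq := (hψ t ht).2
    have h2 : (∫ x in t..Real.pi, M x t * ψ x) = lam * ψ t + Complex.I * ψ' t := by
      linear_combination heq
    rw [h2]
  -- Step 4 : second piece via the equation for et
  have hq : (∫ x in (0:ℝ)..Real.pi, Ψ x * ∫ t in (0:ℝ)..x, GMt (x, t) * E t)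
      = ∫ x in (0:ℝ)..Real.pi, ψ x * (lam * et x - Complex.I * et' x) := by
    apply intervalIntegral.integral_congr
    intro x hx
    dsimp only
    rw [huIcc] at hx
    rw [hΨ x hx]
    congr 1
    have hinner : (∫ t in (0:ℝ)..x, GMt (x, t) * E t) = ∫ t in (0:ℝ)..x, Mt x t * et t := by
      apply intervalIntegral.integral_congr
      intro t ht
      dsimp only
      rw [uIcc_of_le hx.1] at ht
      rw [hGMt _ (hmemT hx ht), hE _ (hmemI hx ht)]
    rw [hinner]
    have heq := (het x hx).2
    linear_combination heq
  -- Step 5 : combine and use the fundamental theorem of calculus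
  rw [key1, hsplit, hp1, hp2, hp3, hq]
  have hint1 : IntervalIntegrable (fun t => (lam * ψ t + Complex.I * ψ' t) * et t)
      volume 0 Real.pi := by
    apply ContinuousOn.intervalIntegrable
    rw [huIcc]
    exact ((continuousOn_const.mul hψc).add (continuousOn_const.mul hψ'c)).mul hetc
  have hint2 : IntervalIntegrable (fun x => ψ x * (lam * et x - Complex.I * et' x))
      volume 0 Real.pi := by
    apply ContinuousOn.intervalIntegrable
    rw [huIcc]
    exact hψc.mul ((continuousOn_const.mul hetc).sub (continuousOn_const.mul het'c))
  rw [← intervalIntegral.integral_sub hint1 hint2]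
  have hcomb : (∫ x in (0:ℝ)..Real.pi,
        ((lam * ψ x + Complex.I * ψ' x) * et x - ψ x * (lam * et x - Complex.I * et' x)))
      = ∫ x in (0:ℝ)..Real.pi, Complex.I * (ψ' x * et x + ψ x * et' x) := by
    apply intervalIntegral.integral_congr
    intro x _
    dsimp only
    ring
  rw [hcomb, intervalIntegral.integral_const_mul]
  have hftc : (∫ x in (0:ℝ)..Real.pi, (ψ' x * et x + ψ x * et' x))
      = ψ Real.pi * et Real.pi - ψ 0 * et 0 := by
    apply intervalIntegral.integral_eq_sub_of_hasDeriv_right_of_le hπ (hψc.mul hetc)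
    · intro x hx
      have h1 : HasDerivAt ψ (ψ' x) x :=
        ((hψ x (Ioo_subset_Icc_self hx)).1).hasDerivAt (Icc_mem_nhds hx.1 hx.2)
      have h2 : HasDerivAt et (et' x) x :=
        ((het x (Ioo_subset_Icc_self hx)).1).hasDerivAt (Icc_mem_nhds hx.1 hx.2)
      exact (h1.mul h2).hasDerivWithinAt
    · apply ContinuousOn.intervalIntegrable
      rw [huIcc]
      exact (hψ'c.mul hetc).add (hψc.mul het'c)
  rw [hftc, hψπ, het0]
  ring
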